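/- Let b = (2 ln 2)^{1/2} and G(ω) = χ(ω ∈ (−∞, −b) ∪ (0, b)). Then the Hermite coefficients satisfy C₁ = φ(0) − 2φ(b) = 0, C₂ = 0, and C₃ = −b²·φ(0) ≠ 0, where C_j = ∫ G(ω)H_j(ω)φ(ω)dω; hence G − E G has Hermite rank 3. -/

import Mathlib

open MeasureTheory

noncomputable def gaussPDF (x : ℝ) : ℝ :=
  (Real.sqrt (2 * Real.pi))⁻¹ * Real.exp (-x ^ 2 / 2)

open Filter Real Set

lemma hrte_int_pow_gauss (n : ℕ) :
    Integrable (fun x : ℝ => x ^ n * Real.exp (-x ^ 2 / 2)) := by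
  have h := integrable_rpow_mul_exp_neg_mul_sq (b := (1:ℝ)/2) (by norm_num)
    (s := (n : ℝ)) (lt_of_lt_of_le (by norm_num) (Nat.cast_nonneg n))
  have e : ∀ x : ℝ, x ^ ((n : ℕ) : ℝ) * Real.exp (-(1/2) * x ^ 2)
      = x ^ n * Real.exp (-x ^ 2 / 2) := by
    intro x; rw [Real.rpow_natCast]; ring_nf
  exact funext e ▸ h

lemma hrte_tendsto_pow_gauss (k : ℕ) :
    Tendsto (fun x : ℝ => x ^ k * Real.exp (-x ^ 2 / 2)) atTop (nhds 0) := by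
  have h := rpow_mul_exp_neg_mul_sq_isLittleO_exp_neg (b := (1:ℝ)/2) (by norm_num) (k : ℝ)
  have h2 : Tendsto (fun x : ℝ => Real.exp (-(1/2) * x)) atTop (nhds 0) :=
    Real.tendsto_exp_atBot.comp (tendsto_id.const_mul_atTop_of_neg (by norm_num : -(1/2:ℝ) < 0))
  have h3 := h.tendsto_zero_of_tendsto h2
  have e : ∀ x : ℝ, x ^ ((k : ℕ) : ℝ) * Real.exp (-(1/2) * x ^ 2)
      = x ^ k * Real.exp (-x ^ 2 / 2) := by
    intro x; rw [Real.rpow_natCast]; ring_nf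
  exact funext e ▸ h3

lemma hrte_tendsto_pow_gauss_bot (k : ℕ) :
    Tendsto (fun x : ℝ => x ^ k * Real.exp (-x ^ 2 / 2)) atBot (nhds 0) := by
  have h := ((hrte_tendsto_pow_gauss k).comp tendsto_neg_atBot_atTop).const_mul ((-1:ℝ) ^ k)
  rw [mul_zero] at h
  refine h.congr fun x => ?_
  simp only [Function.comp]
  have h1 : ((-1:ℝ) ^ k) * ((-1:ℝ) ^ k) = 1 := by
    rw [← pow_add, ← two_mul, pow_mul]; norm_num
  rw [neg_pow, neg_sq]
  linear_combination (x ^ k * Real.exp (-x ^ 2 / 2)) * h1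

lemma hrte_Fbot (a0 a1 a2 : ℝ) :
    Tendsto (fun x : ℝ => -((a0 + a1 * x + a2 * x ^ 2) * gaussPDF x)) atBot (nhds 0) := by
  have h := ((((hrte_tendsto_pow_gauss_bot 0).const_mul ((Real.sqrt (2 * Real.pi))⁻¹ * a0)).add
    ((hrte_tendsto_pow_gauss_bot 1).const_mul ((Real.sqrt (2 * Real.pi))⁻¹ * a1))).add
    ((hrte_tendsto_pow_gauss_bot 2).const_mul ((Real.sqrt (2 * Real.pi))⁻¹ * a2))).neg
  simp only [mul_zero, add_zero, neg_zero] at h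
  refine h.congr fun x => ?_
  unfold gaussPDF
  ring

lemma hrte_int_comb (a0 a1 a2 a3 : ℝ) :
    Integrable (fun x : ℝ => (a0 + a1 * x + a2 * x ^ 2 + a3 * x ^ 3) * gaussPDF x) := by
  have h := ((((hrte_int_pow_gauss 0).const_mul ((Real.sqrt (2 * Real.pi))⁻¹ * a0)).add
    ((hrte_int_pow_gauss 1).const_mul ((Real.sqrt (2 * Real.pi))⁻¹ * a1))).add
    ((hrte_int_pow_gauss 2).const_mul ((Real.sqrt (2 * Real.pi))⁻¹ * a2))).add
    ((hrte_int_pow_gauss 3).const_mul ((Real.sqrt (2 * Real.pi))⁻¹ * a3))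
  refine h.congr (Filter.Eventually.of_forall fun x => ?_)
  simp only [Pi.add_apply]
  unfold gaussPDF
  ring

lemma hrte_integral_Iio (F f : ℝ → ℝ) (hd : ∀ x, HasDerivAt F (f x) x)
    (hi : Integrable f) (hbot : Tendsto F atBot (nhds 0)) (a : ℝ) :
    ∫ x in Set.Iio a, f x = F a := by
  rw [← integral_Iic_eq_integral_Iio, ← neg_neg a, ← integral_comp_neg_Ioi]
  have hder : ∀ x ∈ Set.Ici (-a), HasDerivAt (fun y => -F (-y)) (f (-x)) x := by
    intro x _
    have := ((hd (-x)).comp x (hasDerivAt_neg x)).neg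
    simp at this
    exact this
  have hint : IntegrableOn (fun x => f (-x)) (Set.Ioi (-a)) := (hi.comp_neg).integrableOn
  have htop : Tendsto (fun y => -F (-y)) atTop (nhds 0) := by
    have := (hbot.comp tendsto_neg_atTop_atBot).neg
    simpa using this
  have := integral_Ioi_of_hasDerivAt_of_tendsto' hder hint htop
  rw [this]; simp

lemma hrte_integral_Ioo (F f : ℝ → ℝ) (hd : ∀ x, HasDerivAt F (f x) x)
    (hi : Integrable f) (u v : ℝ) (huv : u ≤ v) :
    ∫ x in Set.Ioo u v, f x = F v - F u := by
  rw [← integral_Ioc_eq_integral_Ioo, ← intervalIntegral.integral_of_le huv]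
  exact intervalIntegral.integral_eq_sub_of_hasDerivAt (fun x _ => hd x) hi.intervalIntegrable

lemma hrte_glue (b : ℝ) (hb : 0 ≤ b) (G : ℝ → ℝ)
    (hG : ∀ w, G w = if w < -b ∨ (0 < w ∧ w < b) then 1 else 0)
    (F f : ℝ → ℝ) (hd : ∀ x, HasDerivAt F (f x) x) (hi : Integrable f)
    (hbot : Tendsto F atBot (nhds 0)) :
    (∫ w, G w * f w) = F (-b) + (F b - F 0) := by
  have hset : (fun w => G w * f w)
      = Set.indicator (Set.Iio (-b) ∪ Set.Ioo 0 b) f := by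
    funext w
    rw [hG w]
    by_cases h : w < -b ∨ (0 < w ∧ w < b) <;>
      simp [Set.indicator_apply, Set.mem_union, Set.mem_Iio, Set.mem_Ioo, h]
  rw [hset, integral_indicator (by measurability)]
  rw [setIntegral_union ?disj measurableSet_Ioo hi.integrableOn hi.integrableOn]
  · rw [hrte_integral_Iio F f hd hi hbot, hrte_integral_Ioo F f hd hi 0 b hb]
  case disj =>
    rw [Set.disjoint_left]
    rintro x hx ⟨h0, _⟩
    simp only [Set.mem_Iio] at hx
    linarith

lemma hrte_deriv_gauss (x : ℝ) : HasDerivAt gaussPDF (-x * gaussPDF x) x := by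
  have h1 : HasDerivAt (fun x : ℝ => -x ^ 2 / 2) (-x) x := by
    have := (hasDerivAt_pow 2 x).neg.div_const 2
    exact this.congr_deriv (by push_cast; ring)
  have h2 := (Real.hasDerivAt_exp (-x ^ 2 / 2)).comp x h1
  have h3 := h2.const_mul ((Real.sqrt (2 * Real.pi))⁻¹)
  exact h3.congr_deriv (by unfold gaussPDF; simp [Function.comp]; ring)

lemma hrte_d1 (x : ℝ) : HasDerivAt (fun x => -gaussPDF x) (x * gaussPDF x) x := by
  have := (hrte_deriv_gauss x).neg
  simp at this
  exact this

lemma hrte_d2 (x : ℝ) :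
    HasDerivAt (fun x => -(x * gaussPDF x)) ((x ^ 2 - 1) * gaussPDF x) x := by
  have := ((hasDerivAt_id x).mul (hrte_deriv_gauss x)).neg
  exact this.congr_deriv (by simp only [id_eq]; ring)

lemma hrte_d3 (x : ℝ) :
    HasDerivAt (fun x => -((x ^ 2 - 1) * gaussPDF x)) ((x ^ 3 - 3 * x) * gaussPDF x) x := by
  have := (((hasDerivAt_pow 2 x).sub_const 1).mul (hrte_deriv_gauss x)).neg
  exact this.congr_deriv (by push_cast; ring)

theorem hermite_rank_three_example (b : ℝ) (hb : b = Real.sqrt (2 * Real.log 2))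
    (G : ℝ → ℝ) (hG : ∀ w, G w = if w < -b ∨ (0 < w ∧ w < b) then 1 else 0) :
    (∫ w, G w * w * gaussPDF w) = gaussPDF 0 - 2 * gaussPDF b ∧
    gaussPDF 0 - 2 * gaussPDF b = 0 ∧
    (∫ w, G w * (w ^ 2 - 1) * gaussPDF w) = 0 ∧
    (∫ w, G w * (w ^ 3 - 3 * w) * gaussPDF w) = -b ^ 2 * gaussPDF 0 ∧
    -b ^ 2 * gaussPDF 0 ≠ 0 := by
  have hb0 : 0 ≤ b := hb ▸ Real.sqrt_nonneg _
  have hlog : (0:ℝ) < Real.log 2 := Real.log_pos one_lt_two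
  have hbsq : b ^ 2 = 2 * Real.log 2 := by
    rw [hb]; exact Real.sq_sqrt (by linarith)
  have hgnb : gaussPDF (-b) = gaussPDF b := by simp [gaussPDF, neg_sq]
  have hg0 : gaussPDF 0 = (Real.sqrt (2 * Real.pi))⁻¹ := by simp [gaussPDF]
  have hgb : gaussPDF b = gaussPDF 0 / 2 := by
    rw [hg0]
    unfold gaussPDF
    rw [hbsq, show -(2 * Real.log 2) / 2 = -Real.log 2 by ring, Real.exp_neg,
      Real.exp_log two_pos]
    ring
  have hg0pos : 0 < gaussPDF 0 := by
    rw [hg0]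
    have : 0 < Real.sqrt (2 * Real.pi) := Real.sqrt_pos.mpr (by positivity)
    positivity
  -- first integral
  have hI1 : (∫ w, G w * w * gaussPDF w) = gaussPDF 0 - 2 * gaussPDF b := by
    have e : (∫ w, G w * w * gaussPDF w) = ∫ w, G w * (w * gaussPDF w) := by
      congr 1; funext w; ring
    have hi : Integrable (fun x : ℝ => x * gaussPDF x) :=
      (hrte_int_comb 0 1 0 0).congr (Filter.Eventually.of_forall fun x => by ring)
    have hbot : Tendsto (fun x : ℝ => -gaussPDF x) atBot (nhds 0) :=
      (hrte_Fbot 1 0 0).congr fun x => by ring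
    rw [e, hrte_glue b hb0 G hG _ _ hrte_d1 hi hbot, hgnb]
    ring
  have hZ : gaussPDF 0 - 2 * gaussPDF b = 0 := by rw [hgb]; ring
  have hI2 : (∫ w, G w * (w ^ 2 - 1) * gaussPDF w) = 0 := by
    have e : (∫ w, G w * (w ^ 2 - 1) * gaussPDF w)
        = ∫ w, G w * ((w ^ 2 - 1) * gaussPDF w) := by
      congr 1; funext w; ring
    have hi : Integrable (fun x : ℝ => (x ^ 2 - 1) * gaussPDF x) :=
      (hrte_int_comb (-1) 0 1 0).congr (Filter.Eventually.of_forall fun x => by ring)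
    have hbot : Tendsto (fun x : ℝ => -(x * gaussPDF x)) atBot (nhds 0) :=
      (hrte_Fbot 0 1 0).congr fun x => by ring
    rw [e, hrte_glue b hb0 G hG _ _ hrte_d2 hi hbot, hgnb]
    ring
  have hI3 : (∫ w, G w * (w ^ 3 - 3 * w) * gaussPDF w) = -b ^ 2 * gaussPDF 0 := by
    have e : (∫ w, G w * (w ^ 3 - 3 * w) * gaussPDF w)
        = ∫ w, G w * ((w ^ 3 - 3 * w) * gaussPDF w) := by
      congr 1; funext w; ring
    have hi : Integrable (fun x : ℝ => (x ^ 3 - 3 * x) * gaussPDF x) :=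
      (hrte_int_comb 0 (-3) 0 1).congr (Filter.Eventually.of_forall fun x => by ring)
    have hbot : Tendsto (fun x : ℝ => -((x ^ 2 - 1) * gaussPDF x)) atBot (nhds 0) :=
      (hrte_Fbot (-1) 0 1).congr fun x => by ring
    rw [e, hrte_glue b hb0 G hG _ _ hrte_d3 hi hbot, hgnb, hgb]
    ring
  refine ⟨hI1, hZ, hI2, hI3, ?_⟩
  have : -b ^ 2 * gaussPDF 0 < 0 := by nlinarith
  exact ne_of_lt this
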